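/- Let A be a unital C*-algebra, and let p and q be Murray–von Neumann equivalent properly infinite full projections in A. Suppose there is a properly infinite full projection r in A with r orthogonal to p and r orthogonal to q. Then p and q are homotopic, i.e., connected by a continuous path of projections in A. -/

import Mathlib

noncomputable section

/-- A projection in a *-ring. -/
def IsProjection {R : Type*} [Mul R] [Star R] (p : R) : Prop :=
  star p = p ∧ p * p = p

/-- Murray–von Neumann equivalence. -/
def MvNEquiv {R : Type*} [Mul R] [Star R] (p q : R) : Prop :=
  ∃ v : R, star v * v = p ∧ v * star v = q

/-- A properly infinite projection: two orthogonal subprojections each equivalent to `p`. -/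
def IsProperlyInfinite {R : Type*} [Ring R] [StarRing R] (p : R) : Prop :=
  ∃ v w : R, star v * v = p ∧ star w * w = p ∧
    p * (v * star v) = v * star v ∧ p * (w * star w) = w * star w ∧
    (v * star v) * (w * star w) = 0

/-- A full element: contained in no proper closed two-sided ideal. -/
def IsFullElem {R : Type*} [Ring R] [TopologicalSpace R] (a : R) : Prop :=
  ∀ I : TwoSidedIdeal R, IsClosed (I : Set R) → a ∈ I → I = ⊤

/-- `[u] = 0` in `K₁`: some stabilization `diag (u,1,…,1)` is connected to `1` in the unitary
group of a matrix algebra. -/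
def K1Trivial {R : Type*} [Ring R] [StarRing R] [TopologicalSpace R] (u : R) : Prop :=
  ∃ n : ℕ, ∃ w : unitary (Matrix (Fin (n + 1)) (Fin (n + 1)) R),
    w.val
      = Matrix.diagonal (fun i => if i = 0 then u else 1) ∧
    Joined (1 : unitary (Matrix (Fin (n + 1)) (Fin (n + 1)) R)) w

/-- `K₁`-injectivity of a unital C*-algebra. -/
def K1Injective (R : Type*) [Ring R] [StarRing R] [TopologicalSpace R] : Prop :=
  ∀ u : unitary R, K1Trivial (u : R) → Joined (1 : unitary R) u

/-- Homotopy of projections: a continuous path of projections from `p` to `q`. -/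
def HomotopicProj {R : Type*} [Mul R] [Star R] [TopologicalSpace R] (p q : R) : Prop :=
  ∃ f : C(unitInterval, R), f 0 = p ∧ f 1 = q ∧ ∀ t, IsProjection (f t)

/-- Stabilized projection `diag (p, 1, …, 1, 0, …, 0)` (with `k+1` ones). -/
def stabProj {R : Type*} [Ring R] (p : R) (k n : ℕ) : Matrix (Fin (n + 1)) (Fin (n + 1)) R :=
  Matrix.diagonal (fun i => if i = 0 then p else if (i : ℕ) ≤ k + 1 then 1 else 0)

/-- `[p] = [q]` in `K₀` of a unital ring, via stabilized Murray–von Neumann equivalence. -/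
def K0Eq {R : Type*} [Ring R] [StarRing R] (p q : R) : Prop :=
  ∃ k n : ℕ, MvNEquiv (stabProj p k n) (stabProj q k n)



/-! ### Auxiliary lemmas for `stmt6` -/

section Stmt6Aux

variable {A : Type*} [CStarAlgebra A]

private lemma pisom (v : A) (h : IsProjection (star v * v)) : v * (star v * v) = v := by
  have h2 := h.2
  rw [← sub_eq_zero, ← CStarRing.star_mul_self_eq_zero_iff]
  have : star (v * (star v * v) - v) * (v * (star v * v) - v)
      = (star v * v) * (star v * v) * (star v * v)
        - (star v * v) * (star v * v) - (star v * v) * (star v * v) + star v * v := by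
    simp [star_sub, star_mul, mul_sub, sub_mul]
    noncomm_ring
  rw [this, h2, h2]
  abel

variable {r x y : A}

private lemma xr_eq (hr : IsProjection r) (h1 : star x * x = r) : x * r = x := by
  rw [← h1]; exact pisom x (h1 ▸ hr)

private lemma exx_eq (hr : IsProjection r) (h1 : star x * x = r) : (x * star x) * x = x := by
  rw [mul_assoc, h1]; exact xr_eq hr h1

private lemma range_proj (hr : IsProjection r) (h1 : star x * x = r) :
    IsProjection (x * star x) := by
  refine ⟨by simp [star_mul], ?_⟩
  rw [← mul_assoc, exx_eq hr h1]

private lemma rx_eq (hr : IsProjection r) (h1 : star x * x = r)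
    (h2 : r * (x * star x) = x * star x) : r * x = x := by
  conv_lhs => rw [← exx_eq hr h1, ← mul_assoc, h2]
  exact exx_eq hr h1

private lemma starx_e (hr : IsProjection r) (h1 : star x * x = r) :
    star x * (x * star x) = star x := by
  have := congrArg star (exx_eq hr h1)
  simpa [star_mul, mul_assoc] using this

private lemma orth_starx_y (hrx : IsProjection r) (h1 : star x * x = r)
    {r' : A} (hry : IsProjection r') (h1' : star y * y = r')
    (horth : (x * star x) * (y * star y) = 0) : star x * y = 0 := by
  have hey : (x * star x) * y = 0 := by
    conv_lhs => rw [← exx_eq hry h1', ← mul_assoc, horth]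
    rw [zero_mul]
  calc star x * y = star x * ((x * star x) * y) := by rw [← mul_assoc, starx_e hrx h1]
    _ = 0 := by rw [hey, mul_zero]

/-- rotation homotopy between orthogonal MvN-equivalent projections -/
private lemma rotPath (p q v : A) (hp : IsProjection p) (hq : IsProjection q)
    (hv1 : star v * v = p) (hv2 : v * star v = q) (hpq : p * q = 0) :
    ∃ γ : Path p q, ∀ t, IsProjection (γ t) := by
  have hqp : q * p = 0 := by
    have := congrArg star hpq
    rwa [star_mul, hp.1, hq.1, star_zero] at this
  have hvp : v * p = v := by rw [← hv1]; exact pisom v (hv1 ▸ hp)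
  have hqv : q * v = v := by
    have : star v * (v * star v) = star v := by
      have := pisom (star v) (by rw [star_star]; exact hv2 ▸ hq)
      rwa [star_star] at this
    have := congrArg star this
    rwa [star_mul, star_mul, star_star, hv2] at this
  have hpv : p * v = 0 := by
    calc p * v = p * (q * v) := by rw [hqv]
    _ = (p * q) * v := by rw [mul_assoc]
    _ = 0 := by rw [hpq, zero_mul]
  have hvq : v * q = 0 := by
    calc v * q = (v * p) * q := by rw [hvp]
    _ = v * (p * q) := by rw [mul_assoc]
    _ = 0 := by rw [hpq, mul_zero]
  have hvv : v * v = 0 := by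
    calc v * v = v * (q * v) := by rw [hqv]
    _ = (v * q) * v := by rw [mul_assoc]
    _ = 0 := by rw [hvq, zero_mul]
  have hpv' : p * star v = star v := by
    have := congrArg star hvp; rwa [star_mul, hp.1] at this
  have hv'p : star v * p = 0 := by
    have := congrArg star hpv; rwa [star_mul, hp.1, star_zero] at this
  have hv'q : star v * q = star v := by
    have := congrArg star hqv; rwa [star_mul, hq.1] at this
  have hqv' : q * star v = 0 := by
    have := congrArg star hvq; rwa [star_mul, hq.1, star_zero] at this
  have hv'v' : star v * star v = 0 := by
    have := congrArg star hvv; rwa [star_mul, star_zero] at this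
  set c : ℝ → ℝ := fun t => Real.cos (Real.pi / 2 * t) with hc
  set s : ℝ → ℝ := fun t => Real.sin (Real.pi / 2 * t) with hs
  set f : ℝ → A := fun t =>
    (c t)^2 • p + ((c t) * (s t)) • v + ((c t) * (s t)) • star v + (s t)^2 • q with hf
  have hcont : Continuous fun t : unitInterval => f t := by
    apply Continuous.add
    apply Continuous.add
    apply Continuous.add
    all_goals fun_prop
  refine ⟨⟨⟨fun t => f t, hcont⟩, ?_, ?_⟩, ?_⟩
  · show f 0 = p
    simp [hf, hc, hs]
  · show f 1 = q
    simp [hf, hc, hs, Real.cos_pi_div_two, Real.sin_pi_div_two]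
  · intro t
    show IsProjection (f t)
    constructor
    · simp only [hf, star_add, star_smul, star_trivial, hp.1, hq.1, star_star]
      abel
    · have key : (c t)^2 + (s t)^2 = 1 := by
        rw [add_comm]; exact Real.sin_sq_add_cos_sq _
      simp only [hf, add_mul, mul_add, smul_mul_assoc, mul_smul_comm, smul_smul,
        hp.2, hq.2, hpv, hvp, hqv, hvq, hvv, hpv', hv'p, hv'q, hqv', hv'v', hv1, hv2, hpq, hqp,
        smul_zero]
      match_scalars <;>
        first
          | linear_combination (c ↑t ^ 2 - 1) * key
          | linear_combination (c ↑t * s ↑t) * key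
          | linear_combination (s ↑t ^ 2 - 1) * key
          | linear_combination (c ↑t ^ 2) * key
          | linear_combination (s ↑t ^ 2) * key

/-- n mutually orthogonal copies of a properly infinite projection inside itself. -/
private lemma copies (r : A) (hr : IsProjection r) (hrpi : IsProperlyInfinite r) (n : ℕ) :
    ∃ s : Fin n → A, (∀ i, star (s i) * s i = r) ∧
      (∀ i, r * (s i * star (s i)) = s i * star (s i)) ∧
      (∀ i j, i ≠ j → (s i * star (s i)) * (s j * star (s j)) = 0) := by
  induction n with
  | zero => exact ⟨fun i => 0, fun i => i.elim0, fun i => i.elim0, fun i => i.elim0⟩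
  | succ n ih =>
    obtain ⟨s, hs1, hs2, hs3⟩ := ih
    obtain ⟨v, w, hv, hw, hvr, hwr, hvw⟩ := hrpi
    have hrw : r * w = w := rx_eq hr hw hwr
    have hrv : r * v = v := rx_eq hr hv hvr
    have hrs : ∀ i, r * s i = s i := fun i => rx_eq hr (hs1 i) (hs2 i)
    have hnew1 : ∀ i : Fin n, star (w * s i) * (w * s i) = r := fun i => by
      rw [star_mul, mul_assoc, ← mul_assoc (star w), hw, hrs i, hs1 i]
    have hnewrange : ∀ i : Fin n, (w * s i) * star (w * s i) = w * (s i * star (s i)) * star w :=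
      fun i => by rw [star_mul]; noncomm_ring
    refine ⟨Fin.cons v (fun i => w * s i), ?_, ?_, ?_⟩
    · refine Fin.cases (by simpa using hv) (fun i => by simpa using hnew1 i)
    · refine Fin.cases (by simpa using hvr) (fun i => ?_)
      simp only [Fin.cons_succ]
      rw [hnewrange i, ← mul_assoc, ← mul_assoc, hrw]
    · have key : ∀ i : Fin n, (v * star v) * ((w * s i) * star (w * s i)) = 0 := by
        intro i
        have hvsw : star v * w = 0 := orth_starx_y hr hv hr hw hvw
        have h0 : (v * star v) * w = 0 := by rw [mul_assoc, hvsw, mul_zero]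
        rw [hnewrange i, ← mul_assoc, ← mul_assoc, h0, zero_mul, zero_mul]
      have key2 : ∀ i j : Fin n, i ≠ j →
          ((w * s i) * star (w * s i)) * ((w * s j) * star (w * s j)) = 0 := by
        intro i j hij
        have hssij : star (s i) * s j = 0 :=
          orth_starx_y hr (hs1 i) hr (hs1 j) (hs3 i j hij)
        rw [hnewrange i, hnewrange j]
        have : star w * (w * (s j * star (s j))) = s j * star (s j) := by
          rw [← mul_assoc, hw, ← mul_assoc, hrs j]
        calc w * (s i * star (s i)) * star w * (w * (s j * star (s j)) * star w)
            = w * (s i * star (s i)) * (star w * (w * (s j * star (s j)))) * star w := by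
              noncomm_ring
          _ = w * (s i * star (s i)) * (s j * star (s j)) * star w := by rw [this]
          _ = 0 := by
              rw [mul_assoc w, mul_assoc (s i), ← mul_assoc (star (s i)), hssij,
                zero_mul, mul_zero, mul_zero, zero_mul]
      intro i j hij
      induction i using Fin.cases with
      | zero =>
        induction j using Fin.cases with
        | zero => exact absurd rfl hij
        | succ j' => simpa using key j'
      | succ i' =>
        induction j using Fin.cases with
        | zero =>
          have := congrArg star (key i')
          simpa [star_mul, star_star, mul_assoc] using this
        | succ j' =>
          have hij' : i' ≠ j' := fun h => hij (by rw [h])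
          simpa using key2 i' j' hij'

/-- From fullness: 1 is a finite sum of elements a i * r * b i. -/
private lemma full_sum (r : A) (hrf : IsFullElem r) :
    ∃ (n : ℕ) (a b : Fin n → A), (1 : A) = ∑ i, a i * r * b i := by
  classical
  set S : Set A := {x | ∃ (n : ℕ) (a b : Fin n → A), x = ∑ i, a i * r * b i} with hS
  have hzero : (0 : A) ∈ S := ⟨0, ![], ![], by simp⟩
  have hadd : ∀ {x y : A}, x ∈ S → y ∈ S → x + y ∈ S := by
    rintro x y ⟨n, a, b, rfl⟩ ⟨m, c, d, rfl⟩
    refine ⟨n + m, Fin.append a c, Fin.append b d, ?_⟩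
    rw [Fin.sum_univ_add]
    simp [Fin.append_left, Fin.append_right]
  have hneg : ∀ {x : A}, x ∈ S → -x ∈ S := by
    rintro x ⟨n, a, b, rfl⟩
    exact ⟨n, fun i => -(a i), b, by simp [Finset.sum_neg_distrib]⟩
  have hmull : ∀ (c : A) {x : A}, x ∈ S → c * x ∈ S := by
    rintro c x ⟨n, a, b, rfl⟩
    refine ⟨n, fun i => c * a i, b, ?_⟩
    rw [Finset.mul_sum]
    simp [mul_assoc]
  have hmulr : ∀ (c : A) {x : A}, x ∈ S → x * c ∈ S := by
    rintro c x ⟨n, a, b, rfl⟩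
    refine ⟨n, a, fun i => b i * c, ?_⟩
    rw [Finset.sum_mul]
    simp [mul_assoc]
  set J : TwoSidedIdeal A := TwoSidedIdeal.mk' (closure S)
    (subset_closure hzero)
    (fun {x y} hx hy => by
      have : Continuous fun p : A × A => p.1 + p.2 := continuous_add
      have := map_mem_closure₂ continuous_add hx hy (fun a ha b hb => hadd ha hb)
      exact this)
    (fun {x} hx => map_mem_closure continuous_neg hx (fun a ha => hneg ha))
    (fun {x y} hy => map_mem_closure (continuous_mul_left x) hy (fun a ha => hmull x ha))
    (fun {x y} hx =>
      map_mem_closure (f := (· * y)) (continuous_mul_right y) hx (fun a ha => hmulr y ha))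
    with hJ
  have hJclosed : IsClosed (J : Set A) := by
    have : (J : Set A) = closure S := TwoSidedIdeal.coe_mk' _ _ _ _ _ _
    rw [this]; exact isClosed_closure
  have hrJ : r ∈ J := by
    rw [hJ, TwoSidedIdeal.mem_mk']
    exact subset_closure ⟨1, ![1], ![1], by simp⟩
  have hJtop := hrf J hJclosed hrJ
  have h1J : (1 : A) ∈ J := by rw [hJtop]; trivial
  have h1S : (1 : A) ∈ closure S := by rwa [hJ, TwoSidedIdeal.mem_mk'] at h1J
  rw [Metric.mem_closure_iff] at h1S
  obtain ⟨z, hzS, hdist⟩ := h1S 1 one_pos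
  obtain ⟨n, a, b, rfl⟩ := hzS
  have hnorm : ‖1 - ∑ i, a i * r * b i‖ < 1 := by
    rwa [dist_eq_norm] at hdist
  set zu : Aˣ := Units.oneSub (1 - ∑ i, a i * r * b i) hnorm with hzu
  have hz : (zu : A) = ∑ i, a i * r * b i := by simp [hzu, Units.oneSub]
  refine ⟨n, fun i => (zu⁻¹ : Aˣ) * a i, b, ?_⟩
  have : (1 : A) = (zu⁻¹ : Aˣ) * (zu : A) := by simp
  rw [this, hz, Finset.mul_sum]
  simp [mul_assoc]

/-- A properly infinite full projection dominates 1: there is an isometry into its corner. -/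
private lemma exists_isometry [Nontrivial A] (r : A) (hr : IsProjection r)
    (hrpi : IsProperlyInfinite r) (hrf : IsFullElem r) :
    ∃ x : A, star x * x = 1 ∧ r * x = x := by
  classical
  obtain ⟨n, a, b, hsum⟩ := full_sum r hrf
  obtain ⟨s, hs1, hs2, hs3⟩ := copies r hr hrpi n
  set t : A := ∑ i, s i * r * b i with htdef
  set u : A := ∑ i, a i * r * star (s i) with hudef
  have hss : ∀ i j, star (s i) * s j = if i = j then r else 0 := by
    intro i j; split_ifs with h
    · subst h; exact hs1 i
    · exact orth_starx_y hr (hs1 i) hr (hs1 j) (hs3 i j h)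
  have hut : u * t = 1 := by
    rw [hudef, htdef, Finset.sum_mul_sum]
    have hterm : ∀ i j, (a i * r * star (s i)) * (s j * r * b j)
        = if i = j then a i * r * b j else 0 := by
      intro i j
      have h0 : (a i * r * star (s i)) * (s j * r * b j)
          = a i * (r * ((star (s i) * s j) * (r * b j))) := by noncomm_ring
      rw [h0, hss]
      split_ifs with h
      · rw [← mul_assoc r r, hr.2, ← mul_assoc r r, hr.2]
        rw [← mul_assoc]
      · simp
    calc ∑ i, ∑ j, (a i * r * star (s i)) * (s j * r * b j)
        = ∑ i, ∑ j, if i = j then a i * r * b j else 0 := by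
          refine Finset.sum_congr rfl fun i _ => Finset.sum_congr rfl fun j _ => hterm i j
      _ = ∑ i, a i * r * b i := by
          refine Finset.sum_congr rfl fun i _ => ?_
          simp
      _ = 1 := hsum.symm
  have hrt : r * t = t := by
    rw [htdef, Finset.mul_sum]
    refine Finset.sum_congr rfl fun i _ => ?_
    rw [← mul_assoc, ← mul_assoc, rx_eq hr (hs1 i) (hs2 i)]
  letI : PartialOrder A := CStarAlgebra.spectralOrder A
  haveI : StarOrderedRing A := CStarAlgebra.spectralOrderedRing A
  have hd : (0:A) ≤ star t * t := star_mul_self_nonneg t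
  have hdsa : IsSelfAdjoint (star t * t) := IsSelfAdjoint.star_mul_self t
  have huusa : IsSelfAdjoint (star u * u) := IsSelfAdjoint.star_mul_self u
  have huu : star u * u ≤ algebraMap ℝ A ‖star u * u‖ := huusa.le_algebraMap_norm_self
  have h1 : (1:A) = star t * (star u * u) * t := by
    have := congrArg (fun z => star z * z) hut
    simp only [star_mul, star_one, one_mul] at this
    rw [← this]; noncomm_ring
  have h2 : (1:A) ≤ ‖star u * u‖ • (star t * t) := by
    calc (1:A) = star t * (star u * u) * t := h1
      _ ≤ star t * algebraMap ℝ A ‖star u * u‖ * t := star_left_conjugate_le_conjugate huu t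
      _ = ‖star u * u‖ • (star t * t) := by
          rw [Algebra.algebraMap_eq_smul_one]
          simp only [mul_smul_comm, smul_mul_assoc, mul_one]
  have hunit : IsUnit (‖star u * u‖ • (star t * t)) :=
    CStarAlgebra.isUnit_of_le 1 h2 isStrictlyPositive_one
  have hcne : ‖star u * u‖ ≠ 0 := by
    rintro hc
    rw [hc, zero_smul] at hunit
    exact not_isUnit_zero hunit
  have hd_unit : IsUnit (star t * t) := by
    rw [← isUnit_smul_iff (Units.mk0 _ hcne) (star t * t)]
    simpa [Units.smul_mk0] using hunit
  set m := CFC.sqrt (star t * t) with hmdef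
  have hm : m * m = star t * t := CFC.sqrt_mul_sqrt_self _ hd
  have hmsa : IsSelfAdjoint m := IsSelfAdjoint.of_nonneg (CFC.sqrt_nonneg _)
  set k := Ring.inverse (star t * t) with hkdef
  have hdk : (star t * t) * k = 1 := Ring.mul_inverse_cancel _ hd_unit
  have hkd : k * (star t * t) = 1 := Ring.inverse_mul_cancel _ hd_unit
  have hksa : star k = k := by
    have h1 : star k * (star t * t) = 1 := by
      have := congrArg star hdk
      rwa [star_mul, hdsa.star_eq, star_one] at this
    calc star k = star k * ((star t * t) * k) := by rw [hdk, mul_one]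
      _ = (star k * (star t * t)) * k := (mul_assoc _ _ _).symm
      _ = k := by rw [h1, one_mul]
  have hcm : m * (star t * t) = (star t * t) * m := by rw [← hm]; noncomm_ring
  have hkm : k * m = m * k := by
    calc k * m = k * m * ((star t * t) * k) := by rw [hdk, mul_one]
      _ = k * (m * (star t * t)) * k := by noncomm_ring
      _ = k * ((star t * t) * m) * k := by rw [hcm]
      _ = (k * (star t * t)) * (m * k) := by noncomm_ring
      _ = m * k := by rw [hkd, one_mul]
  refine ⟨t * (m * k), ?_, ?_⟩
  · have hgsa : star (m * k) = m * k := by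
      rw [star_mul, hksa, hmsa.star_eq, hkm]
    have hexp : star (t * (m * k)) * (t * (m * k))
        = star (m * k) * (star t * t) * (m * k) := by
      simp only [star_mul]; noncomm_ring
    rw [hexp, hgsa]
    calc m * k * (star t * t) * (m * k) = m * (k * (star t * t)) * (m * k) := by noncomm_ring
      _ = m * (m * k) := by rw [hkd, mul_one]
      _ = (m * m) * k := (mul_assoc _ _ _).symm
      _ = 1 := by rw [hm, hdk]
  · rw [← mul_assoc, hrt]

end Stmt6Aux

/-- equivalent properly infinite full projections `p ∼ q` which are both orthogonal
to some properly infinite full projection `r` are homotopic. -/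
theorem stmt6 {A : Type*} [CStarAlgebra A] (p q r : A)
    (hp : IsProjection p) (hq : IsProjection q) (hr : IsProjection r)
    (hppi : IsProperlyInfinite p) (hpf : IsFullElem p)
    (hqpi : IsProperlyInfinite q) (hqf : IsFullElem q)
    (hrpi : IsProperlyInfinite r) (hrf : IsFullElem r)
    (hpq : MvNEquiv p q) (hrp : r * p = 0) (hrq : r * q = 0) :
    HomotopicProj p q := by
  classical
  obtain hsub | hnt := subsingleton_or_nontrivial A
  · exact ⟨ContinuousMap.const _ p, rfl, Subsingleton.elim _ _, fun t => hp⟩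
  obtain ⟨v, hv1, hv2⟩ := hpq
  obtain ⟨x, hx1, hx2⟩ := exists_isometry r hr hrpi hrf
  have hpr : p * r = 0 := by
    have := congrArg star hrp; rwa [star_mul, hp.1, hr.1, star_zero] at this
  have hqr : q * r = 0 := by
    have := congrArg star hrq; rwa [star_mul, hq.1, hr.1, star_zero] at this
  set b : A := x * p with hbdef
  have hb1 : star b * b = p := by
    have h0 : star (x * p) * (x * p) = p * (star x * x) * p := by
      rw [star_mul, hp.1]; noncomm_ring
    rw [hbdef, h0, hx1, mul_one, hp.2]
  have hp' : IsProjection (b * star b) := range_proj hp hb1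
  have hrp' : r * (b * star b) = b * star b := by
    have h0 : r * (b * star b) = (r * x) * (p * (star p * star x)) := by
      rw [hbdef, star_mul]; noncomm_ring
    rw [h0, hx2, hbdef, star_mul]; noncomm_ring
  have hpp' : p * (b * star b) = 0 := by
    rw [← hrp', ← mul_assoc, hpr, zero_mul]
  have hqp' : q * (b * star b) = 0 := by
    rw [← hrp', ← mul_assoc, hqr, zero_mul]
  obtain ⟨γ₁, hγ₁⟩ := rotPath p (b * star b) b hp hp' hb1 rfl hpp'
  have hvp : v * p = v := xr_eq hp hv1
  have hw1 : star (b * star v) * (b * star v) = q := by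
    have h0 : star (b * star v) * (b * star v) = v * (star b * b) * star v := by
      rw [star_mul, star_star]; noncomm_ring
    rw [h0, hb1, hvp, hv2]
  have hw2 : (b * star v) * star (b * star v) = b * star b := by
    have h0 : (b * star v) * star (b * star v) = b * (star v * v) * star b := by
      rw [star_mul, star_star]; noncomm_ring
    have hbp : b * p = b := by rw [hbdef, mul_assoc, hp.2]
    rw [h0, hv1, hbp]
  obtain ⟨γ₂, hγ₂⟩ := rotPath q (b * star b) (b * star v) hq hp' hw1 hw2 hqp'
  refine ⟨(γ₁.trans γ₂.symm).toContinuousMap, ?_, ?_, ?_⟩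
  · simp
  · simp
  · intro t
    have h2 : ∀ t, IsProjection (γ₂.symm t) := fun t => by
      rw [Path.symm_apply]; exact hγ₂ _
    show IsProjection ((γ₁.trans γ₂.symm) t)
    rw [Path.trans_apply]
    split_ifs
    exacts [hγ₁ _, h2 _]
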